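/- arXiv:nlin/0103035 — 2 statements merged into one kernel-verified Lean document; each statement's English description precedes it below -/
import Mathlib

section
/- Local helicity conservation law for the barotropic motion equation. Work in ℝ³. Let u, v : ℝ³ × ℝ → ℝ³ and g : ℝ³ × ℝ → ℝ be smooth and satisfy ∂ₜv = u × curl v − ∇g everywhere. Then the helicity density satisfies the local conservation law ∂ₜ(v · curl v) = div( (u × curl v) × v − g · curl v ) everywhere. Consequently, if there is a compact set K ⊂ ℝ³ such that v(·,t), u(·,t) and g(·,t) are supported in K for every t, then the total helicity Λ(t) := ∫_{ℝ³} v · curl v dx is constant in time. -/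
open scoped BigOperators
open MeasureTheory

noncomputable section

/-- Curl of a vector field on ℝ³ (cyclic, 0-based indices). -/
def curl3 (v : (Fin 3 → ℝ) → (Fin 3 → ℝ)) (x : Fin 3 → ℝ) : Fin 3 → ℝ :=
  fun i => fderiv ℝ (fun y => v y (i + 2)) x (Pi.single (i + 1) 1)
         - fderiv ℝ (fun y => v y (i + 1)) x (Pi.single (i + 2) 1)

/-- Cross product on ℝ³. -/
def cross (a b : Fin 3 → ℝ) : Fin 3 → ℝ :=
  fun i => a (i + 1) * b (i + 2) - a (i + 2) * b (i + 1)

section helAux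
open Set

variable {E : Type*} [NormedAddCommGroup E] [NormedSpace ℝ E]

lemma hel_one : ((⊤:ℕ∞) : WithTop ℕ∞) ≠ 0 := by
  simp

lemma hel_two : minSmoothness ℝ 2 ≤ ((⊤:ℕ∞) : WithTop ℕ∞) := by
  rw [minSmoothness_of_isRCLikeNormedField]
  exact_mod_cast ENat.natCast_le_of_coe_top_le_withTop le_rfl 2

lemma hel_pd_smooth (f : E → ℝ) (hf : ContDiff ℝ (⊤:ℕ∞) f) (a : E) :
    ContDiff ℝ (⊤:ℕ∞) (fun y => fderiv ℝ f y a) :=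
  (ContinuousLinearMap.apply ℝ ℝ a).contDiff.comp
    (hf.fderiv_right (le_of_eq ENat.coe_top_add_one))

lemma hel_pd_comm (f : E → ℝ) (hf : ContDiff ℝ (⊤:ℕ∞) f) (x a b : E) :
    fderiv ℝ (fun y => fderiv ℝ f y a) x b = fderiv ℝ (fun y => fderiv ℝ f y b) x a := by
  have hd : Differentiable ℝ (fderiv ℝ f) :=
    (hf.fderiv_right (le_of_eq ENat.coe_top_add_one)).differentiable hel_one
  have h1 : ∀ c : E, fderiv ℝ (fun y => fderiv ℝ f y c) x
      = (fderiv ℝ (fderiv ℝ f) x).flip c := by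
    intro c
    have := fderiv_clm_apply (x := x) (hd.differentiableAt) (differentiableAt_const c)
    simpa using this
  rw [h1, h1]
  simp only [ContinuousLinearMap.flip_apply]
  exact (hf.contDiffAt.isSymmSndFDerivAt hel_two) b a

lemma hel_sliceX_smooth (F : E × ℝ → ℝ) (hF : ContDiff ℝ (⊤:ℕ∞) F) (t : ℝ) :
    ContDiff ℝ (⊤:ℕ∞) (fun y => F (y, t)) :=
  hF.comp (contDiff_id.prodMk contDiff_const)

lemma hel_sliceX_fderiv (F : E × ℝ → ℝ) (hF : Differentiable ℝ F) (x : E) (t : ℝ) (e : E) :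
    fderiv ℝ (fun y => F (y, t)) x e = fderiv ℝ F (x, t) (e, 0) := by
  have h : HasFDerivAt (fun y : E => (y, t)) ((ContinuousLinearMap.inl ℝ E ℝ)) x :=
    (hasFDerivAt_id x).prodMk (hasFDerivAt_const t x)
  have h2 := ((hF.differentiableAt).hasFDerivAt.comp x h).fderiv
  have h3 : fderiv ℝ (fun y => F (y, t)) x
      = (fderiv ℝ F (x, t)).comp (ContinuousLinearMap.inl ℝ E ℝ) := h2
  rw [h3]; rfl

lemma hel_sliceT_hasDeriv (F : E × ℝ → ℝ) (hF : Differentiable ℝ F) (x : E) (t : ℝ) :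
    HasDerivAt (fun s => F (x, s)) (fderiv ℝ F (x, t) (0, 1)) t := by
  have h : HasDerivAt (fun s : ℝ => (x, s)) ((0 : E), (1 : ℝ)) t := by
    simpa using ((hasDerivAt_const t x).prodMk (hasDerivAt_id t))
  exact (hF.differentiableAt.hasFDerivAt.comp_hasDerivAt t h)

lemma hel_sliceT_deriv (F : E × ℝ → ℝ) (hF : Differentiable ℝ F) (x : E) (t : ℝ) :
    deriv (fun s => F (x, s)) t = fderiv ℝ F (x, t) (0, 1) :=
  (hel_sliceT_hasDeriv F hF x t).deriv

lemma hel_pd_smooth' (f : E × ℝ → ℝ) (hf : ContDiff ℝ (⊤:ℕ∞) f) (a : E × ℝ) :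
    ContDiff ℝ (⊤:ℕ∞) (fun y => fderiv ℝ f y a) :=
  (ContinuousLinearMap.apply ℝ ℝ a).contDiff.comp
    (hf.fderiv_right (le_of_eq ENat.coe_top_add_one))

lemma hel_pd_comm' (f : E × ℝ → ℝ) (hf : ContDiff ℝ (⊤:ℕ∞) f) (x a b : E × ℝ) :
    fderiv ℝ (fun y => fderiv ℝ f y a) x b = fderiv ℝ (fun y => fderiv ℝ f y b) x a := by
  have hd : Differentiable ℝ (fderiv ℝ f) :=
    (hf.fderiv_right (le_of_eq ENat.coe_top_add_one)).differentiable hel_one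
  have h1 : ∀ c : E × ℝ, fderiv ℝ (fun y => fderiv ℝ f y c) x
      = (fderiv ℝ (fderiv ℝ f) x).flip c := by
    intro c
    have := fderiv_clm_apply (x := x) (hd.differentiableAt) (differentiableAt_const c)
    simpa using this
  rw [h1, h1]
  simp only [ContinuousLinearMap.flip_apply]
  exact (hf.contDiffAt.isSymmSndFDerivAt hel_two) b a

lemma hel_commTX (F : E × ℝ → ℝ) (hF : ContDiff ℝ (⊤:ℕ∞) F) (x : E) (t : ℝ) (e : E) :
    deriv (fun s => fderiv ℝ (fun y => F (y, s)) x e) t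
      = fderiv ℝ (fun y => deriv (fun s => F (y, s)) t) x e := by
  have hd : Differentiable ℝ F := hF.differentiable hel_one
  have e1 : (fun s => fderiv ℝ (fun y => F (y, s)) x e)
      = fun s => (fun p => fderiv ℝ F p (e, 0)) (x, s) := by
    funext s; exact hel_sliceX_fderiv F hd x s e
  have e2 : (fun y => deriv (fun s => F (y, s)) t)
      = fun y => (fun p => fderiv ℝ F p ((0 : E), (1:ℝ))) (y, t) := by
    funext y; exact hel_sliceT_deriv F hd y t
  rw [e1, e2]
  rw [hel_sliceT_deriv _ ((hel_pd_smooth' F hF _).differentiable hel_one) x t]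
  rw [hel_sliceX_fderiv _ ((hel_pd_smooth' F hF _).differentiable hel_one) x t e]
  exact hel_pd_comm' F hF (x, t) (e, 0) (0, 1)

lemma hel_fderiv_mul {f g : E → ℝ} {x w : E} (hf : DifferentiableAt ℝ f x)
    (hg : DifferentiableAt ℝ g x) :
    fderiv ℝ (fun y => f y * g y) x w
      = f x * fderiv ℝ g x w + g x * fderiv ℝ f x w := by
  rw [fderiv_fun_mul hf hg]; simp

lemma hel_fderiv_add {f g : E → ℝ} {x w : E} (hf : DifferentiableAt ℝ f x)
    (hg : DifferentiableAt ℝ g x) :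
    fderiv ℝ (fun y => f y + g y) x w = fderiv ℝ f x w + fderiv ℝ g x w := by
  rw [fderiv_fun_add hf hg]; simp

lemma hel_fderiv_sub {f g : E → ℝ} {x w : E} (hf : DifferentiableAt ℝ f x)
    (hg : DifferentiableAt ℝ g x) :
    fderiv ℝ (fun y => f y - g y) x w = fderiv ℝ f x w - fderiv ℝ g x w := by
  rw [fderiv_fun_sub hf hg]; simp

end helAux


open Set in
lemma hel_div_zero (W : Fin 3 → (Fin 3 → ℝ) → ℝ) (hW : ∀ i, ContDiff ℝ (⊤:ℕ∞) (W i))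
    (K : Set (Fin 3 → ℝ)) (hK : IsCompact K) (h0 : ∀ i x, x ∉ K → W i x = 0) :
    ∫ x, ∑ i, fderiv ℝ (W i) x (Pi.single i 1) = 0 := by
  have hWd : ∀ i, Differentiable ℝ (W i) := fun i => (hW i).differentiable hel_one
  have hDc : Continuous (fun x => ∑ i, fderiv ℝ (W i) x (Pi.single i 1)) := by
    refine continuous_finset_sum _ (fun i _ => ?_)
    exact (hel_pd_smooth _ (hW i) _).continuous
  have hD0 : ∀ x, x ∉ K → (∑ i, fderiv ℝ (W i) x (Pi.single i 1)) = 0 := by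
    intro x hx
    have : ∀ i, fderiv ℝ (W i) x = 0 := by
      intro i
      have hev : W i =ᶠ[nhds x] (fun _ => (0:ℝ)) :=
        Filter.eventually_of_mem (hK.isClosed.isOpen_compl.mem_nhds hx) (fun y hy => h0 i y hy)
      rw [hev.fderiv_eq, fderiv_fun_const]
      rfl
    simp [this]
  obtain ⟨R₀, hR₀⟩ := hK.isBounded.subset_closedBall 0
  set R : ℝ := max R₀ 0 with hRdef
  have hKR : K ⊆ Metric.closedBall 0 R :=
    hR₀.trans (Metric.closedBall_subset_closedBall (le_max_left _ _))
  have hR0 : 0 ≤ R := le_max_right _ _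
  set a : Fin 3 → ℝ := fun _ => -(R+1) with ha
  set b : Fin 3 → ℝ := fun _ => (R+1) with hb
  have hle : a ≤ b := fun i => by simp [ha, hb]; linarith
  have hKIcc : K ⊆ Icc a b := by
    intro x hx
    have hn : ‖x‖ ≤ R := by simpa using hKR hx
    constructor
    · intro i
      have := (abs_le.1 ((norm_le_pi_norm x i).trans hn)).1
      simp only [ha]; linarith
    · intro i
      have := (abs_le.1 ((norm_le_pi_norm x i).trans hn)).2
      simp only [hb]; linarith
  have key := MeasureTheory.integral_divergence_of_hasFDerivAt_off_countable' (n := 2)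
    a b hle W (fun i x => fderiv ℝ (W i) x) ∅ Set.countable_empty
    (fun i => (hW i).continuous.continuousOn)
    (fun x _ i => ((hWd i) x).hasFDerivAt)
    (hDc.continuousOn.integrableOn_compact isCompact_Icc)
  have hfaces : ∀ i : Fin 3,
      ((∫ x in Icc (a ∘ i.succAbove) (b ∘ i.succAbove), W i (i.insertNth (b i) x)) -
        ∫ x in Icc (a ∘ i.succAbove) (b ∘ i.succAbove), W i (i.insertNth (a i) x)) = 0 := by
    intro i
    have hout : ∀ (c : ℝ), |c| = R + 1 → ∀ y : Fin 2 → ℝ, W i (i.insertNth c y) = 0 := by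
      intro c hc y
      set z : Fin 3 → ℝ := i.insertNth c y with hz
      apply h0
      intro hmem
      have h1 : ‖z‖ ≤ R := by simpa using hKR hmem
      have h2 : |z i| ≤ R := (norm_le_pi_norm z i).trans h1
      have h3 : z i = c := by rw [hz]; exact Fin.insertNth_apply_same (α := fun _ : Fin 3 => ℝ) i c y
      rw [h3, hc] at h2
      linarith
    have e1 : (∫ x in Icc (a ∘ i.succAbove) (b ∘ i.succAbove), W i (i.insertNth (b i) x)) = 0 := by
      rw [setIntegral_congr_fun measurableSet_Icc (g := fun (_ : Fin 2 → ℝ) => (0:ℝ))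
        (fun y _ => hout (b i) (by simp [hb]; linarith) y)]
      simp
    have e2 : (∫ x in Icc (a ∘ i.succAbove) (b ∘ i.succAbove), W i (i.insertNth (a i) x)) = 0 := by
      rw [setIntegral_congr_fun measurableSet_Icc (g := fun (_ : Fin 2 → ℝ) => (0:ℝ))
        (fun y _ => hout (a i) (by simp [ha]; rw [abs_of_nonpos] <;> linarith) y)]
      simp
    rw [e1, e2, sub_zero]
  rw [← setIntegral_eq_integral_of_forall_compl_eq_zero
    (s := Icc a b) (fun x hx => hD0 x (fun hxK => hx (hKIcc hxK)))]
  rw [key, Finset.sum_eq_zero (fun i _ => hfaces i)]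


set_option maxHeartbeats 2000000 in
/-- **Local helicity conservation law for the barotropic motion equation.**
If `∂ₜv = u × curl v − ∇g`, then
`∂ₜ(v·curl v) = div((u × curl v) × v − g·curl v)`; consequently under uniform
compact support the total helicity `Λ(t) = ∫ v·curl v dx` is constant. -/
theorem helicity_conservation
    (u v : (Fin 3 → ℝ) → ℝ → (Fin 3 → ℝ))
    (g : (Fin 3 → ℝ) → ℝ → ℝ)
    -- smoothness
    (hu : ContDiff ℝ (⊤ : ℕ∞) (fun p : (Fin 3 → ℝ) × ℝ => u p.1 p.2))
    (hv : ContDiff ℝ (⊤ : ℕ∞) (fun p : (Fin 3 → ℝ) × ℝ => v p.1 p.2))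
    (hg : ContDiff ℝ (⊤ : ℕ∞) (fun p : (Fin 3 → ℝ) × ℝ => g p.1 p.2))
    -- motion equation : ∂ₜv = u × curl v − ∇g
    (hmotion : ∀ x t i,
      deriv (fun s => v x s i) t
        = cross (u x t) (curl3 (fun y => v y t) x) i
          - fderiv ℝ (fun y => g y t) x (Pi.single i 1)) :
    -- local helicity conservation law
    ((∀ x t,
      deriv (fun s => ∑ i, v x s i * curl3 (fun y => v y s) x i) t
        = ∑ i, fderiv ℝ
            (fun y =>
              cross (cross (u y t) (curl3 (fun z => v z t) y)) (v y t) i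
                - g y t * curl3 (fun z => v z t) y i) x
            (Pi.single i 1)))
    -- global conservation of total helicity under uniform compact support
    ∧ ((∃ K : Set (Fin 3 → ℝ), IsCompact K ∧
          ∀ t, (Function.support (fun x => v x t) ⊆ K)
            ∧ (Function.support (fun x => u x t) ⊆ K)
            ∧ (Function.support (fun x => g x t) ⊆ K)) →
        ∀ t₁ t₂,
          (∫ x, ∑ i, v x t₁ i * curl3 (fun y => v y t₁) x i)
            = ∫ x, ∑ i, v x t₂ i * curl3 (fun y => v y t₂) x i) := by
  have hpart1 :
    (∀ x t,
      deriv (fun s => ∑ i, v x s i * curl3 (fun y => v y s) x i) t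
        = ∑ i, fderiv ℝ
            (fun y =>
              cross (cross (u y t) (curl3 (fun z => v z t) y)) (v y t) i
                - g y t * curl3 (fun z => v z t) y i) x
            (Pi.single i 1)) := by
    intro x t
    -- component smoothness
    have hV : ∀ i : Fin 3, ContDiff ℝ (⊤:ℕ∞) (fun p : (Fin 3 → ℝ) × ℝ => v p.1 p.2 i) := by
      intro i; exact (ContinuousLinearMap.proj i).contDiff.comp hv
    have hU : ∀ i : Fin 3, ContDiff ℝ (⊤:ℕ∞) (fun p : (Fin 3 → ℝ) × ℝ => u p.1 p.2 i) := by
      intro i; exact (ContinuousLinearMap.proj i).contDiff.comp hu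
    -- differentiability of spatial slice atoms (for fun_prop)
    have hdva : ∀ (s : ℝ) (i : Fin 3), Differentiable ℝ (fun y => v y s i) :=
      fun s i => (hel_sliceX_smooth _ (hV i) s).differentiable hel_one
    have hdua : ∀ (s : ℝ) (i : Fin 3), Differentiable ℝ (fun y => u y s i) :=
      fun s i => (hel_sliceX_smooth _ (hU i) s).differentiable hel_one
    have hdga : ∀ (s : ℝ), Differentiable ℝ (fun y => g y s) :=
      fun s => (hel_sliceX_smooth _ hg s).differentiable hel_one
    have hdvp : ∀ (s : ℝ) (j k : Fin 3),
        Differentiable ℝ (fun y => fderiv ℝ (fun z => v z s j) y (Pi.single k 1)) :=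
      fun s j k => (hel_pd_smooth _ (hel_sliceX_smooth _ (hV j) s) _).differentiable hel_one
    have hdgp : ∀ (s : ℝ) (k : Fin 3),
        Differentiable ℝ (fun y => fderiv ℝ (fun z => g z s) y (Pi.single k 1)) :=
      fun s k => (hel_pd_smooth _ (hel_sliceX_smooth _ hg s) _).differentiable hel_one
    -- time derivatives of components
    have hVder : ∀ k : Fin 3, HasDerivAt (fun s => v x s k)
        (fderiv ℝ (fun p : (Fin 3 → ℝ) × ℝ => v p.1 p.2 k) (x, t) (0, 1)) t :=
      fun k => hel_sliceT_hasDeriv _ ((hV k).differentiable hel_one) x t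
    -- time derivatives of spatial-derivative atoms
    have hPder : ∀ j k : Fin 3, HasDerivAt (fun s => fderiv ℝ (fun y => v y s j) x (Pi.single k 1))
        (fderiv ℝ (fun p : (Fin 3 → ℝ) × ℝ =>
          fderiv ℝ (fun q : (Fin 3 → ℝ) × ℝ => v q.1 q.2 j) p (Pi.single k 1, 0)) (x, t) (0, 1)) t := by
      intro j k
      have h := hel_sliceT_hasDeriv
        (fun p => fderiv ℝ (fun q : (Fin 3 → ℝ) × ℝ => v q.1 q.2 j) p (Pi.single k 1, 0))
        ((hel_pd_smooth' _ (hV j) _).differentiable hel_one) x t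
      have he : (fun s => fderiv ℝ (fun q : (Fin 3 → ℝ) × ℝ => v q.1 q.2 j) (x, s) (Pi.single k 1, 0))
          = (fun s => fderiv ℝ (fun y => v y s j) x (Pi.single k 1)) := by
        funext s
        exact (hel_sliceX_fderiv (fun q : (Fin 3 → ℝ) × ℝ => v q.1 q.2 j)
          ((hV j).differentiable hel_one) x s (Pi.single k 1)).symm
      rw [he] at h
      exact h
    -- motion equation for the time-derivative values
    have hDtV : ∀ k : Fin 3, fderiv ℝ (fun p : (Fin 3 → ℝ) × ℝ => v p.1 p.2 k) (x, t) (0, 1)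
        = cross (u x t) (curl3 (fun y => v y t) x) k
          - fderiv ℝ (fun y => g y t) x (Pi.single k 1) := by
      intro k
      rw [← hel_sliceT_deriv _ ((hV k).differentiable hel_one) x t]
      exact hmotion x t k
    have hDtP : ∀ j k : Fin 3, fderiv ℝ (fun p : (Fin 3 → ℝ) × ℝ =>
          fderiv ℝ (fun q : (Fin 3 → ℝ) × ℝ => v q.1 q.2 j) p (Pi.single k 1, 0)) (x, t) (0, 1)
        = fderiv ℝ (fun y => cross (u y t) (curl3 (fun z => v z t) y) j
            - fderiv ℝ (fun z => g z t) y (Pi.single j 1)) x (Pi.single k 1) := by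
      intro j k
      rw [← hel_sliceT_deriv _ ((hel_pd_smooth' _ (hV j) _).differentiable hel_one) x t]
      have he : (fun s => fderiv ℝ (fun q : (Fin 3 → ℝ) × ℝ => v q.1 q.2 j) (x, s) (Pi.single k 1, 0))
          = (fun s => fderiv ℝ (fun y => v y s j) x (Pi.single k 1)) := by
        funext s
        exact (hel_sliceX_fderiv (fun q : (Fin 3 → ℝ) × ℝ => v q.1 q.2 j)
          ((hV j).differentiable hel_one) x s (Pi.single k 1)).symm
      rw [he]
      rw [hel_commTX (fun q : (Fin 3 → ℝ) × ℝ => v q.1 q.2 j) (hV j) x t (Pi.single k 1)]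
      have hfun : (fun y => deriv (fun s => v (y, s).1 (y, s).2 j) t)
          = (fun y => cross (u y t) (curl3 (fun z => v z t) y) j
              - fderiv ℝ (fun z => g z t) y (Pi.single j 1)) := by
        funext y; exact hmotion y t j
      rw [hfun]
    have h3 : (3:Fin 3) = 0 := rfl
    have h4 : (4:Fin 3) = 1 := rfl
    have h5 : (5:Fin 3) = 2 := rfl
    have h6 : (6:Fin 3) = 0 := rfl
    have h7 : (7:Fin 3) = 1 := rfl
    have h8 : (8:Fin 3) = 2 := rfl
    simp only [curl3, cross, Fin.sum_univ_three]
    simp only [Fin.reduceAdd, h3, h4, h5, h6, h7, h8]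
    -- LHS time derivative
    have hbig :
        HasDerivAt (fun s =>
          v x s 0 * (fderiv ℝ (fun y => v y s 2) x (Pi.single 1 1)
                   - fderiv ℝ (fun y => v y s 1) x (Pi.single 2 1)) +
          v x s 1 * (fderiv ℝ (fun y => v y s 0) x (Pi.single 2 1)
                   - fderiv ℝ (fun y => v y s 2) x (Pi.single 0 1)) +
          v x s 2 * (fderiv ℝ (fun y => v y s 1) x (Pi.single 0 1)
                   - fderiv ℝ (fun y => v y s 0) x (Pi.single 1 1)))
        (((fderiv ℝ (fun p : (Fin 3 → ℝ) × ℝ => v p.1 p.2 0) (x, t) (0, 1)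
            * (fderiv ℝ (fun y => v y t 2) x (Pi.single 1 1)
              - fderiv ℝ (fun y => v y t 1) x (Pi.single 2 1))
          + v x t 0 * (fderiv ℝ (fun p : (Fin 3 → ℝ) × ℝ =>
              fderiv ℝ (fun q : (Fin 3 → ℝ) × ℝ => v q.1 q.2 2) p (Pi.single 1 1, 0)) (x, t) (0, 1)
            - fderiv ℝ (fun p : (Fin 3 → ℝ) × ℝ =>
              fderiv ℝ (fun q : (Fin 3 → ℝ) × ℝ => v q.1 q.2 1) p (Pi.single 2 1, 0)) (x, t) (0, 1)))
        + (fderiv ℝ (fun p : (Fin 3 → ℝ) × ℝ => v p.1 p.2 1) (x, t) (0, 1)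
            * (fderiv ℝ (fun y => v y t 0) x (Pi.single 2 1)
              - fderiv ℝ (fun y => v y t 2) x (Pi.single 0 1))
          + v x t 1 * (fderiv ℝ (fun p : (Fin 3 → ℝ) × ℝ =>
              fderiv ℝ (fun q : (Fin 3 → ℝ) × ℝ => v q.1 q.2 0) p (Pi.single 2 1, 0)) (x, t) (0, 1)
            - fderiv ℝ (fun p : (Fin 3 → ℝ) × ℝ =>
              fderiv ℝ (fun q : (Fin 3 → ℝ) × ℝ => v q.1 q.2 2) p (Pi.single 0 1, 0)) (x, t) (0, 1))))
        + (fderiv ℝ (fun p : (Fin 3 → ℝ) × ℝ => v p.1 p.2 2) (x, t) (0, 1)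
            * (fderiv ℝ (fun y => v y t 1) x (Pi.single 0 1)
              - fderiv ℝ (fun y => v y t 0) x (Pi.single 1 1))
          + v x t 2 * (fderiv ℝ (fun p : (Fin 3 → ℝ) × ℝ =>
              fderiv ℝ (fun q : (Fin 3 → ℝ) × ℝ => v q.1 q.2 1) p (Pi.single 0 1, 0)) (x, t) (0, 1)
            - fderiv ℝ (fun p : (Fin 3 → ℝ) × ℝ =>
              fderiv ℝ (fun q : (Fin 3 → ℝ) × ℝ => v q.1 q.2 0) p (Pi.single 1 1, 0)) (x, t) (0, 1)))) t := by
      exact (((hVder 0).mul ((hPder 2 1).sub (hPder 1 2))).add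
             ((hVder 1).mul ((hPder 0 2).sub (hPder 2 0)))).add
            ((hVder 2).mul ((hPder 1 0).sub (hPder 0 1)))
    rw [hbig.deriv]
    rw [hDtV 0, hDtV 1, hDtV 2, hDtP 2 1, hDtP 1 2, hDtP 0 2, hDtP 2 0, hDtP 1 0, hDtP 0 1]
    simp only [curl3, cross]
    simp only [Fin.reduceAdd, h3, h4, h5, h6, h7, h8]
    simp (disch := fun_prop) only [hel_fderiv_sub, hel_fderiv_mul, hel_fderiv_add]
    have hQ : ∀ j k l : Fin 3,
        fderiv ℝ (fun y => fderiv ℝ (fun z => v z t j) y (Pi.single k 1)) x (Pi.single l 1)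
          = fderiv ℝ (fun y => fderiv ℝ (fun z => v z t j) y (Pi.single l 1)) x (Pi.single k 1) :=
      fun j k l => hel_pd_comm _ (hel_sliceX_smooth _ (hV j) t) x _ _
    have hH : ∀ k l : Fin 3,
        fderiv ℝ (fun y => fderiv ℝ (fun z => g z t) y (Pi.single k 1)) x (Pi.single l 1)
          = fderiv ℝ (fun y => fderiv ℝ (fun z => g z t) y (Pi.single l 1)) x (Pi.single k 1) :=
      fun k l => hel_pd_comm _ (hel_sliceX_smooth _ hg t) x _ _
    simp only [hQ 0 1 0, hQ 0 2 0, hQ 0 2 1, hQ 1 1 0, hQ 1 2 0, hQ 1 2 1,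
      hQ 2 1 0, hQ 2 2 0, hQ 2 2 1, hH 1 0, hH 2 0, hH 2 1]
    ring
  refine ⟨hpart1, ?_⟩
  rintro ⟨K, hK, hks⟩ t₁ t₂
  have hV : ∀ i : Fin 3, ContDiff ℝ (⊤:ℕ∞) (fun p : (Fin 3 → ℝ) × ℝ => v p.1 p.2 i) := by
    intro i; exact (ContinuousLinearMap.proj i).contDiff.comp hv
  have hU : ∀ i : Fin 3, ContDiff ℝ (⊤:ℕ∞) (fun p : (Fin 3 → ℝ) × ℝ => u p.1 p.2 i) := by
    intro i; exact (ContinuousLinearMap.proj i).contDiff.comp hu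
  set Φ : (Fin 3 → ℝ) × ℝ → ℝ := fun p => ∑ i : Fin 3, v p.1 p.2 i *
      (fderiv ℝ (fun q : (Fin 3 → ℝ) × ℝ => v q.1 q.2 (i+2)) p (Pi.single (i+1) 1, 0)
       - fderiv ℝ (fun q : (Fin 3 → ℝ) × ℝ => v q.1 q.2 (i+1)) p (Pi.single (i+2) 1, 0))
    with hΦdef
  have hΦ : ContDiff ℝ (⊤:ℕ∞) Φ := by
    apply ContDiff.sum
    intro i _
    exact (hV i).mul ((hel_pd_smooth' _ (hV (i+2)) _).sub (hel_pd_smooth' _ (hV (i+1)) _))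
  have hΦeq : ∀ (z : Fin 3 → ℝ) (s : ℝ),
      Φ (z, s) = ∑ i, v z s i * curl3 (fun y => v y s) z i := by
    intro z s
    rw [hΦdef]
    refine Finset.sum_congr rfl (fun i _ => ?_)
    rw [curl3]
    rw [hel_sliceX_fderiv (fun q : (Fin 3 → ℝ) × ℝ => v q.1 q.2 (i+2))
      ((hV (i+2)).differentiable hel_one) z s (Pi.single (i+1) 1)]
    rw [hel_sliceX_fderiv (fun q : (Fin 3 → ℝ) × ℝ => v q.1 q.2 (i+1))
      ((hV (i+1)).differentiable hel_one) z s (Pi.single (i+2) 1)]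
  have hzero_v : ∀ (s : ℝ) (z : Fin 3 → ℝ), z ∉ K → v z s = 0 :=
    fun s z hz => Function.notMem_support.mp (fun hmem => hz ((hks s).1 hmem))
  have hzero_g : ∀ (s : ℝ) (z : Fin 3 → ℝ), z ∉ K → g z s = 0 :=
    fun s z hz => Function.notMem_support.mp (fun hmem => hz ((hks s).2.2 hmem))
  have hΦ0 : ∀ (s : ℝ) (z : Fin 3 → ℝ), z ∉ K → Φ (z, s) = 0 := by
    intro s z hz
    rw [hΦdef]
    refine Finset.sum_eq_zero (fun i _ => ?_)
    simp [hzero_v s z hz]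
  set I : ℝ → ℝ := fun s => ∫ z, Φ (z, s) with hIdef
  have hI : ∀ t₀ : ℝ, HasDerivAt I 0 t₀ := by
    intro t₀
    -- continuity facts
    have hpdΦ : ContDiff ℝ (⊤:ℕ∞) (fun p => fderiv ℝ Φ p ((0:Fin 3 → ℝ), (1:ℝ))) :=
      hel_pd_smooth' Φ hΦ _
    obtain ⟨C, hC⟩ := (hK.prod (isCompact_Icc (a := t₀ - 1) (b := t₀ + 1))).exists_bound_of_continuousOn
      (hpdΦ.continuous.continuousOn)
    have hF'0 : ∀ (s : ℝ) (z : Fin 3 → ℝ), z ∉ K → fderiv ℝ Φ (z, s) ((0:Fin 3 → ℝ), (1:ℝ)) = 0 := by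
      intro s z hz
      rw [← hel_sliceT_deriv Φ (hΦ.differentiable hel_one) z s]
      rw [show (fun s' => Φ (z, s')) = fun _ => (0:ℝ) from funext (fun s' => hΦ0 s' z hz)]
      exact deriv_const s 0
    have key := hasDerivAt_integral_of_dominated_loc_of_deriv_le
      (F := fun s z => Φ (z, s)) (F' := fun s z => fderiv ℝ Φ (z, s) ((0:Fin 3 → ℝ), (1:ℝ)))
      (x₀ := t₀) (μ := (volume : Measure (Fin 3 → ℝ))) (bound := K.indicator (fun _ => |C|)) (s := Metric.ball t₀ 1) (Metric.ball_mem_nhds t₀ one_pos)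
      (Filter.Eventually.of_forall (fun s =>
        ((hel_sliceX_smooth Φ hΦ s).continuous.aestronglyMeasurable)))
      (((hel_sliceX_smooth Φ hΦ t₀).continuous).integrable_of_hasCompactSupport
        (HasCompactSupport.intro hK (fun z hz => hΦ0 t₀ z hz)))
      (((hpdΦ.continuous.comp (continuous_id.prodMk continuous_const)).aestronglyMeasurable))
      (Filter.Eventually.of_forall (fun z => by
        intro s hs
        show ‖(fderiv ℝ Φ (z, s)) ((0:Fin 3 → ℝ), (1:ℝ))‖ ≤ K.indicator (fun _ => |C|) z
        by_cases hzK : z ∈ K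
        · rw [Set.indicator_of_mem hzK]
          refine (hC (z, s) ⟨hzK, ?_⟩).trans (le_abs_self C)
          have := Metric.mem_ball.mp hs
          rw [Real.dist_eq] at this
          constructor <;> [linarith [abs_le.mp (le_of_lt this)]; linarith [(abs_le.mp (le_of_lt this)).2]]
        · rw [Set.indicator_of_notMem hzK, hF'0 s z hzK]
          simp))
      ((integrable_indicator_iff hK.measurableSet).2
        (integrableOn_const hK.measure_lt_top.ne))
      (Filter.Eventually.of_forall (fun z => by
        intro s _
        exact hel_sliceT_hasDeriv Φ (hΦ.differentiable hel_one) z s))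
    have hval : (∫ z, fderiv ℝ Φ (z, t₀) ((0:Fin 3 → ℝ), (1:ℝ))) = 0 := by
      -- identify with divergence and apply hel_div_zero
      set W : Fin 3 → (Fin 3 → ℝ) → ℝ := fun i y =>
        cross (cross (u y t₀) (curl3 (fun z => v z t₀) y)) (v y t₀) i
          - g y t₀ * curl3 (fun z => v z t₀) y i with hWdef
      have hcurl_sm : ∀ j : Fin 3, ContDiff ℝ (⊤:ℕ∞) (fun y => curl3 (fun z => v z t₀) y j) := by
        intro j
        simp only [curl3]
        exact (hel_pd_smooth _ (hel_sliceX_smooth _ (hV (j+2)) t₀) _).sub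
          (hel_pd_smooth _ (hel_sliceX_smooth _ (hV (j+1)) t₀) _)
      have hva : ∀ j : Fin 3, ContDiff ℝ (⊤:ℕ∞) (fun y => v y t₀ j) :=
        fun j => hel_sliceX_smooth _ (hV j) t₀
      have hua : ∀ j : Fin 3, ContDiff ℝ (⊤:ℕ∞) (fun y => u y t₀ j) :=
        fun j => hel_sliceX_smooth _ (hU j) t₀
      have hga : ContDiff ℝ (⊤:ℕ∞) (fun y => g y t₀) := hel_sliceX_smooth _ hg t₀
      have hWsm : ∀ i, ContDiff ℝ (⊤:ℕ∞) (W i) := by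
        intro i
        rw [hWdef]
        simp only [cross]
        exact (((((hua (i+1+1)).mul (hcurl_sm (i+1+2))).sub
                ((hua (i+1+2)).mul (hcurl_sm (i+1+1)))).mul (hva (i+2))).sub
              ((((hua (i+2+1)).mul (hcurl_sm (i+2+2))).sub
                ((hua (i+2+2)).mul (hcurl_sm (i+2+1)))).mul (hva (i+1)))).sub
               (hga.mul (hcurl_sm i))
      have hW0 : ∀ i z, z ∉ K → W i z = 0 := by
        intro i z hz
        rw [hWdef]
        simp [cross, hzero_v t₀ z hz, hzero_g t₀ z hz]
      have hdiv := hel_div_zero W hWsm K hK hW0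
      have heq : ∀ z : Fin 3 → ℝ, fderiv ℝ Φ (z, t₀) ((0:Fin 3 → ℝ), (1:ℝ))
          = ∑ i, fderiv ℝ (W i) z (Pi.single i 1) := by
        intro z
        rw [← hel_sliceT_deriv Φ (hΦ.differentiable hel_one) z t₀]
        rw [show (fun s => Φ (z, s)) = (fun s => ∑ i, v z s i * curl3 (fun y => v y s) z i)
          from funext (fun s => hΦeq z s)]
        exact hpart1 z t₀
      rw [show (fun z => fderiv ℝ Φ (z, t₀) ((0:Fin 3 → ℝ), (1:ℝ)))
          = fun z => ∑ i, fderiv ℝ (W i) z (Pi.single i 1) from funext heq]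
      exact hdiv
    rw [← hval]
    exact key.2
  have hconst : I t₁ = I t₂ :=
    is_const_of_deriv_eq_zero (fun t => (hI t).differentiableAt) (fun t => (hI t).deriv) t₁ t₂
  calc (∫ x, ∑ i, v x t₁ i * curl3 (fun y => v y t₁) x i)
      = I t₁ := congrArg (fun F => ∫ z, F z) (funext (fun z => (hΦeq z t₁).symm))
    _ = I t₂ := hconst
    _ = ∫ x, ∑ i, v x t₂ i * curl3 (fun y => v y t₂) x i :=
        congrArg (fun F => ∫ z, F z) (funext (fun z => hΦeq z t₂))
end
end

section
/- Conservation of the H¹ energy for the incompressible Euler-alpha (Lagrangian-averaged Euler) equations. Work in ℝ³ and let α > 0 be a constant. Let u : ℝ³ × ℝ → ℝ³ and p : ℝ³ × ℝ → ℝ be smooth with div u(·,t) = 0 for every t, and suppose there is a compact set K ⊂ ℝ³ with u(·,t) and p(·,t) supported in K for every t. Set v := u − α²Δu (Laplacian taken componentwise in the space variable) and assume the Euler-alpha equation ∂ₜv + (u·∇)v + v_j∇u^j + ∇p = 0 holds everywhere. Then the energy E(t) := ½ ∫_{ℝ³} ( |u(x,t)|² + α² |∇u(x,t)|² ) dx is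 constant in time, where |∇u|² = Σ_{i,j} (∂uⁱ/∂xʲ)². -/
open scoped BigOperators
open MeasureTheory

noncomputable section

namespace EA

abbrev Sp : Type := Fin 3 → ℝ
abbrev Q : Type := Sp × ℝ
def pd (w : Q) (F : Q → ℝ) (q : Q) : ℝ := fderiv ℝ F q w
def ee (j : Fin 3) : Q := (Pi.single j 1, 0)
def et : Q := (0, 1)

lemma smtop : ((⊤ : ℕ∞) : WithTop ℕ∞) + 1 ≤ ((⊤ : ℕ∞) : WithTop ℕ∞) := by
  exact_mod_cast le_top
lemma one_le_smtop : 1 ≤ ((⊤ : ℕ∞) : WithTop ℕ∞) := by exact_mod_cast le_top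
lemma two_le_smtop : 2 ≤ ((⊤ : ℕ∞) : WithTop ℕ∞) := by
  have : ((2:ℕ∞) : WithTop ℕ∞) ≤ ((⊤ : ℕ∞) : WithTop ℕ∞) := by exact_mod_cast le_top
  simpa using this

lemma smPD {F : Q → ℝ} (hF : ContDiff ℝ (⊤ : ℕ∞) F) (w : Q) :
    ContDiff ℝ (⊤ : ℕ∞) (pd w F) :=
  (hF.fderiv_right smtop).clm_apply contDiff_const
lemma smDiff {F : Q → ℝ} (hF : ContDiff ℝ (⊤ : ℕ∞) F) : Differentiable ℝ F :=
  hF.differentiable (by simp)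

/-- spatial slice derivative equals joint directional derivative -/
lemma hasFDerivAt_slice {F : Q → ℝ} (hF : Differentiable ℝ F) (x : Sp) (t : ℝ) :
    HasFDerivAt (fun y => F (y, t))
      ((fderiv ℝ F (x, t)).comp ((ContinuousLinearMap.id ℝ Sp).prod 0)) x :=
  (hF (x, t)).hasFDerivAt.comp x (HasFDerivAt.prodMk (hasFDerivAt_id x) (hasFDerivAt_const t x))

lemma fderiv_slice {F : Q → ℝ} (hF : Differentiable ℝ F) (x : Sp) (t : ℝ) (w : Sp) :
    fderiv ℝ (fun y => F (y, t)) x w = fderiv ℝ F (x, t) (w, 0) := by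
  rw [(hasFDerivAt_slice hF x t).fderiv]
  simp

lemma fderiv_slice_single {F : Q → ℝ} (hF : Differentiable ℝ F) (x : Sp) (t : ℝ) (j : Fin 3) :
    fderiv ℝ (fun y => F (y, t)) x (Pi.single j 1) = pd (ee j) F (x, t) :=
  fderiv_slice hF x t _

lemma hasDerivAt_slice {F : Q → ℝ} (hF : Differentiable ℝ F) (x : Sp) (t : ℝ) :
    HasDerivAt (fun s => F (x, s)) (pd et F (x, t)) t := by
  have h1 : HasDerivAt (fun s : ℝ => ((x, s) : Q)) ((0 : Sp), (1 : ℝ)) t :=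
    HasDerivAt.prodMk (hasDerivAt_const t x) (hasDerivAt_id t)
  exact (hF (x, t)).hasFDerivAt.comp_hasDerivAt t h1

lemma vec_decomp (w : Sp) : ((w, (0:ℝ)) : Q) = ∑ j, w j • ee j := by
  refine Prod.ext ?_ ?_
  · rw [Prod.fst_sum]
    funext a
    simp [ee, Finset.sum_apply, Pi.single_apply]
  · rw [Prod.snd_sum]
    simp [ee]

lemma fderiv_apply_vec0 (L : Q →L[ℝ] ℝ) (w : Sp) :
    L (w, 0) = ∑ j, w j * L (ee j) := by
  rw [vec_decomp, map_sum]
  simp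

lemma pd_pd_eq {F : Q → ℝ} (hF : ContDiff ℝ (⊤ : ℕ∞) F) (w w' q : Q) :
    pd w (pd w' F) q = fderiv ℝ (fderiv ℝ F) q w w' := by
  have hc : DifferentiableAt ℝ (fderiv ℝ F) q :=
    ((hF.fderiv_right smtop).differentiable (by simp)) q
  show fderiv ℝ (fun y => (fderiv ℝ F y) w') q w = _
  rw [fderiv_clm_apply hc (differentiableAt_const w')]
  simp

lemma pd_comm {F : Q → ℝ} (hF : ContDiff ℝ (⊤ : ℕ∞) F) (w w' : Q) (q : Q) :
    pd w (pd w' F) q = pd w' (pd w F) q := by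
  rw [pd_pd_eq hF, pd_pd_eq hF]
  exact (hF.contDiffAt.isSymmSndFDerivAt (by simpa using two_le_smtop)).eq w w'

lemma pd_add {f g : Q → ℝ} (hf : Differentiable ℝ f) (hg : Differentiable ℝ g) (w : Q) (q : Q) :
    pd w (fun r => f r + g r) q = pd w f q + pd w g q := by
  unfold pd
  rw [fderiv_fun_add (hf q) (hg q)]
  simp

lemma pd_sub {f g : Q → ℝ} (hf : Differentiable ℝ f) (hg : Differentiable ℝ g) (w : Q) (q : Q) :
    pd w (fun r => f r - g r) q = pd w f q - pd w g q := by
  unfold pd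
  rw [fderiv_fun_sub (hf q) (hg q)]
  simp

lemma pd_const_mul {f : Q → ℝ} (hf : Differentiable ℝ f) (c : ℝ) (w : Q) (q : Q) :
    pd w (fun r => c * f r) q = c * pd w f q := by
  unfold pd
  rw [fderiv_const_mul (hf q)]
  simp

lemma pd_mul {f g : Q → ℝ} (hf : Differentiable ℝ f) (hg : Differentiable ℝ g) (w : Q) (q : Q) :
    pd w (fun r => f r * g r) q = f q * pd w g q + g q * pd w f q := by
  unfold pd
  rw [fderiv_fun_mul (hf q) (hg q)]
  simp

lemma pd_sum {ι : Type*} (s : Finset ι) {f : ι → Q → ℝ} (hf : ∀ i, Differentiable ℝ (f i))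
    (w : Q) (q : Q) :
    pd w (fun r => ∑ i ∈ s, f i r) q = ∑ i ∈ s, pd w (f i) q := by
  unfold pd
  rw [fderiv_fun_sum (fun i _ => (hf i) q)]
  simp

lemma pd_sq {f : Q → ℝ} (hf : Differentiable ℝ f) (w : Q) (q : Q) :
    pd w (fun r => f r ^ 2) q = 2 * f q * pd w f q := by
  have : (fun r => f r ^ 2) = fun r => f r * f r := by
    funext r; ring
  rw [this, pd_mul hf hf]
  ring

def SuppIn (K : Set Sp) (F : Q → ℝ) : Prop := ∀ q : Q, q.1 ∉ K → F q = 0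

lemma SuppIn.pd {K : Set Sp} {F : Q → ℝ} (hK : IsClosed K) (hF : SuppIn K F) (w : Q) :
    SuppIn K (pd w F) := by
  intro q hq
  have hopen : IsOpen {r : Q | r.1 ∉ K} := hK.isOpen_compl.preimage continuous_fst
  have hev : F =ᶠ[nhds q] (fun _ => (0:ℝ)) := by
    filter_upwards [hopen.mem_nhds hq] with r hr using hF r hr
  show fderiv ℝ F q w = 0
  rw [Filter.EventuallyEq.fderiv_eq hev]
  simp

lemma integrable_slice {K : Set Sp} {F : Q → ℝ} (hK : IsCompact K) (hF : Continuous F)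
    (hs : SuppIn K F) (t : ℝ) :
    Integrable (fun x => F (x, t)) := by
  apply Continuous.integrable_of_hasCompactSupport
  · exact hF.comp (continuous_id.prodMk continuous_const)
  · exact HasCompactSupport.intro hK (fun x hx => hs (x, t) hx)

lemma integral_pd_eq_zero {K : Set Sp} {F : Q → ℝ} (hK : IsCompact K)
    (hF : ContDiff ℝ (⊤:ℕ∞) F) (hs : SuppIn K F) (j : Fin 3) (t : ℝ) :
    ∫ x, pd (ee j) F (x, t) = 0 := by
  have hg : Differentiable ℝ (fun y => F (y, t)) :=
    fun x => (hasFDerivAt_slice (smDiff hF) x t).differentiableAt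
  have hslice : ∀ x, fderiv ℝ (fun y => F (y, t)) x (Pi.single j 1) = pd (ee j) F (x, t) :=
    fun x => fderiv_slice_single (smDiff hF) x t j
  have h1 : Integrable (fun x : Sp =>
      fderiv ℝ (fun _ : Sp => (1:ℝ)) x (Pi.single j 1) * F (x, t)) := by
    simpa using (integrable_zero Sp ℝ (volume : Measure Sp))
  have h2 : Integrable (fun x : Sp => (1:ℝ) * fderiv ℝ (fun y => F (y, t)) x (Pi.single j 1)) := by
    simp only [one_mul, hslice]
    exact integrable_slice hK ((smPD hF (ee j)).continuous) (hs.pd hK.isClosed (ee j)) t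
  have h3 : Integrable (fun x : Sp => (1:ℝ) * F (x, t)) := by
    simp only [one_mul]
    exact integrable_slice hK hF.continuous hs t
  have h := integral_mul_fderiv_eq_neg_fderiv_mul_of_integrable (μ := (volume : Measure Sp))
      (f := fun _ : Sp => (1:ℝ)) (g := fun y => F (y, t)) (v := Pi.single j 1)
      h1 h2 h3 (fun x _ => differentiableAt_const (1:ℝ)) (fun x _ => hg x)
  simp only [one_mul, hslice] at h
  simpa using h

lemma hasDerivAt_integral {K : Set Sp} {F : Q → ℝ} (hK : IsCompact K)
    (hF : ContDiff ℝ (⊤:ℕ∞) F) (hs : SuppIn K F) (t₀ : ℝ) :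
    HasDerivAt (fun t => ∫ x, F (x, t)) (∫ x, pd et F (x, t₀)) t₀ := by
  obtain ⟨C, hC⟩ := (hK.prod (isCompact_Icc (a := t₀ - 1) (b := t₀ + 1))).exists_bound_of_continuousOn
    ((smPD hF et).continuous.continuousOn)
  set bound : Sp → ℝ := K.indicator (fun _ => C) with hbdef
  have key := hasDerivAt_integral_of_dominated_loc_of_deriv_le (μ := (volume : Measure Sp))
    (F := fun t x => F (x, t)) (F' := fun t x => pd et F (x, t)) (x₀ := t₀)
    (bound := bound) (Metric.ball_mem_nhds t₀ one_pos)
    (Filter.Eventually.of_forall (fun t =>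
      ((hF.continuous.comp (continuous_id.prodMk continuous_const)).aestronglyMeasurable)))
    (integrable_slice hK hF.continuous hs t₀)
    (((smPD hF et).continuous.comp (continuous_id.prodMk continuous_const)).aestronglyMeasurable)
    (Filter.Eventually.of_forall ?_)
    ?_
    (Filter.Eventually.of_forall (fun x t _ => hasDerivAt_slice (smDiff hF) x t))
  · exact key.2
  · intro x t ht
    by_cases hx : x ∈ K
    · have hxt : (x, t) ∈ K ×ˢ Set.Icc (t₀ - 1) (t₀ + 1) := by
        refine ⟨hx, ?_⟩
        have : |t - t₀| < 1 := by
          simpa [Real.dist_eq] using (Metric.mem_ball.1 ht)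
        have h' := abs_lt.1 this
        constructor <;> [linarith [h'.1]; linarith [h'.2]]
      have := hC _ hxt
      simpa [hbdef, Set.indicator_of_mem hx] using this
    · have h0 : pd et F (x, t) = 0 := hs.pd hK.isClosed et (x, t) hx
      simp [h0, hbdef, Set.indicator_of_notMem hx]
  · rw [hbdef]
    rw [integrable_indicator_iff hK.measurableSet]
    exact integrableOn_const hK.measure_lt_top.ne

section Key

variable {K : Set Sp}

lemma suppIn_mul_left {F : Q → ℝ} (hF : SuppIn K F) (G : Q → ℝ) :
    SuppIn K (fun q => F q * G q) := fun q hq => by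
  show F q * G q = 0
  rw [hF q hq, zero_mul]

theorem key
    (α : ℝ)
    (U : Fin 3 → Q → ℝ) (P : Q → ℝ) (V : Fin 3 → Q → ℝ)
    (hU : ∀ i, ContDiff ℝ (⊤:ℕ∞) (U i)) (hP : ContDiff ℝ (⊤:ℕ∞) P)
    (hK : IsCompact K)
    (hUs : ∀ i, SuppIn K (U i)) (hPs : SuppIn K P)
    (hdivq : ∀ q, ∑ i, pd (ee i) (U i) q = 0)
    (hV : ∀ i, V i = fun q => U i q - α^2 * ∑ j, pd (ee j) (pd (ee j) (U i)) q)
    (hM : ∀ i q, pd et (V i) q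
        = -(∑ j, U j q * pd (ee j) (V i) q) - (∑ j, V j q * pd (ee i) (U j) q) - pd (ee i) P q)
    (t₁ t₂ : ℝ) :
    ∫ x, ((∑ i, U i (x,t₁) ^ 2) + α^2 * ∑ i, ∑ j, pd (ee j) (U i) (x,t₁) ^ 2)
      = ∫ x, ((∑ i, U i (x,t₂) ^ 2) + α^2 * ∑ i, ∑ j, pd (ee j) (U i) (x,t₂) ^ 2) := by
  classical
  -- differentiability bookkeeping
  have hUd : ∀ i, Differentiable ℝ (U i) := fun i => smDiff (hU i)
  have hWsm : ∀ i, ContDiff ℝ (⊤:ℕ∞) (pd et (U i)) := fun i => smPD (hU i) et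
  have hdUsm : ∀ j i, ContDiff ℝ (⊤:ℕ∞) (pd (ee j) (U i)) := fun j i => smPD (hU i) (ee j)
  have hdWsm : ∀ j i, ContDiff ℝ (⊤:ℕ∞) (pd (ee j) (pd et (U i))) :=
    fun j i => smPD (hWsm i) (ee j)
  have hVsm : ∀ i, ContDiff ℝ (⊤:ℕ∞) (V i) := by
    intro i
    rw [hV i]
    exact (hU i).sub (contDiff_const.mul
      (ContDiff.sum (fun j _ => smPD (smPD (hU i) (ee j)) (ee j))))
  have hVd : ∀ i, Differentiable ℝ (V i) := fun i => smDiff (hVsm i)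
  -- the energy density
  set e : Q → ℝ := fun q => (∑ i, U i q ^ 2) + α^2 * ∑ i, ∑ j, pd (ee j) (U i) q ^ 2
    with hedef
  have hesm : ContDiff ℝ (⊤:ℕ∞) e := by
    refine ContDiff.add ?_ (contDiff_const.mul ?_)
    · exact ContDiff.sum (fun i _ => (hU i).pow 2)
    · exact ContDiff.sum (fun i _ => ContDiff.sum (fun j _ => (hdUsm j i).pow 2))
  have hes : SuppIn K e := by
    intro q hq
    have h1 : ∀ i, U i q = 0 := fun i => hUs i q hq
    have h2 : ∀ i j, pd (ee j) (U i) q = 0 :=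
      fun i j => (hUs i).pd hK.isClosed (ee j) q hq
    simp [hedef, h1, h2]
  -- the flux
  set Φ : Fin 3 → Q → ℝ := fun j q =>
      2*α^2 * (∑ i, U i q * pd (ee j) (pd et (U i)) q)
      - 2 * (∑ i, U i q * U j q * V i q) - 2 * (U j q * P q) with hΦdef
  have hΦsm : ∀ j, ContDiff ℝ (⊤:ℕ∞) (Φ j) := by
    intro j
    refine ContDiff.sub (ContDiff.sub (contDiff_const.mul ?_) (contDiff_const.mul ?_))
      (contDiff_const.mul ((hU j).mul hP))
    · exact ContDiff.sum (fun i _ => (hU i).mul (hdWsm j i))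
    · exact ContDiff.sum (fun i _ => ((hU i).mul (hU j)).mul (hVsm i))
  have hΦs : ∀ j, SuppIn K (Φ j) := by
    intro j q hq
    have h1 : ∀ i, U i q = 0 := fun i => hUs i q hq
    simp [hΦdef, h1]
  -- pointwise identity : ∂ₜ e = div Φ
  have star : ∀ q, pd et e q = ∑ j, pd (ee j) (Φ j) q := by
    intro q
    -- LHS
    have hL : pd et e q = (∑ i, 2 * U i q * pd et (U i) q)
        + α^2 * ∑ i, ∑ j, 2 * pd (ee j) (U i) q * pd (ee j) (pd et (U i)) q := by
      rw [hedef]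
      rw [pd_add (Differentiable.fun_sum (fun i _ => (hUd i).fun_pow 2))
        ((differentiable_const _).fun_mul (Differentiable.fun_sum (fun i _ =>
          Differentiable.fun_sum (fun j _ => (smDiff (hdUsm j i)).fun_pow 2))))]
      rw [pd_sum _ (fun i => (hUd i).fun_pow 2)]
      rw [pd_const_mul (Differentiable.fun_sum (fun i _ =>
          Differentiable.fun_sum (fun j _ => (smDiff (hdUsm j i)).fun_pow 2)))]
      rw [pd_sum _ (fun i => Differentiable.fun_sum (fun j _ => (smDiff (hdUsm j i)).fun_pow 2))]
      congr 1
      · exact Finset.sum_congr rfl fun i _ => pd_sq (hUd i) et q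
      · congr 1
        refine Finset.sum_congr rfl fun i _ => ?_
        rw [pd_sum _ (fun j => (smDiff (hdUsm j i)).fun_pow 2)]
        refine Finset.sum_congr rfl fun j _ => ?_
        rw [pd_sq (smDiff (hdUsm j i))]
        rw [pd_comm (hU i) et (ee j)]
    -- RHS, single flux component
    have hR : ∀ j, pd (ee j) (Φ j) q
        = 2*α^2 * (∑ i, (U i q * pd (ee j) (pd (ee j) (pd et (U i))) q
              + pd (ee j) (pd et (U i)) q * pd (ee j) (U i) q))
          - 2 * (∑ i, (U i q * U j q * pd (ee j) (V i) q
              + V i q * (U i q * pd (ee j) (U j) q + U j q * pd (ee j) (U i) q)))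
          - 2 * (U j q * pd (ee j) P q + P q * pd (ee j) (U j) q) := by
      intro j
      have d1 : Differentiable ℝ (fun r => ∑ i, U i r * pd (ee j) (pd et (U i)) r) :=
        Differentiable.fun_sum (fun i _ => (hUd i).fun_mul (smDiff (hdWsm j i)))
      have d2 : Differentiable ℝ (fun r => ∑ i, U i r * U j r * V i r) :=
        Differentiable.fun_sum (fun i _ => (((hUd i).fun_mul (hUd j)).fun_mul (hVd i)))
      have d3 : Differentiable ℝ (fun r => U j r * P r) := (hUd j).fun_mul (smDiff hP)
      rw [hΦdef]
      rw [pd_sub (((differentiable_const _).fun_mul d1).fun_sub ((differentiable_const _).fun_mul d2))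
        ((differentiable_const _).fun_mul d3)]
      rw [pd_sub ((differentiable_const _).fun_mul d1) ((differentiable_const _).fun_mul d2)]
      rw [pd_const_mul d1, pd_const_mul d2, pd_const_mul d3]
      rw [pd_mul (hUd j) (smDiff hP)]
      rw [pd_sum _ (fun i => (hUd i).fun_mul (smDiff (hdWsm j i)))]
      rw [pd_sum _ (fun i => ((hUd i).fun_mul (hUd j)).fun_mul (hVd i))]
      congr 2
      · congr 1
        refine Finset.sum_congr rfl fun i _ => ?_
        rw [pd_mul (hUd i) (smDiff (hdWsm j i))]
      · congr 1
        refine Finset.sum_congr rfl fun i _ => ?_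
        rw [pd_mul ((hUd i).fun_mul (hUd j)) (hVd i), pd_mul (hUd i) (hUd j)]
    -- relation between ∂ₜ V and ∂ₜ U
    have hVW : ∀ i, pd et (V i) q = pd et (U i) q
        - α^2 * ∑ j, pd (ee j) (pd (ee j) (pd et (U i))) q := by
      intro i
      rw [hV i]
      rw [pd_sub (hUd i) ((differentiable_const _).fun_mul (Differentiable.fun_sum
        (fun j _ => smDiff (smPD (smPD (hU i) (ee j)) (ee j)))))]
      rw [pd_const_mul (Differentiable.fun_sum
        (fun j _ => smDiff (smPD (smPD (hU i) (ee j)) (ee j))))]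
      rw [pd_sum _ (fun j => smDiff (smPD (smPD (hU i) (ee j)) (ee j)))]
      congr 2
      refine Finset.sum_congr rfl fun j _ => ?_
      have h1 : pd et (pd (ee j) (pd (ee j) (U i))) q
          = pd (ee j) (pd et (pd (ee j) (U i))) q := pd_comm (smPD (hU i) (ee j)) et (ee j) q
      have h2 : pd et (pd (ee j) (U i)) = pd (ee j) (pd et (U i)) :=
        funext (fun r => pd_comm (hU i) et (ee j) r)
      rw [h1, h2]
    -- consequence of the motion equation for ∂ₜ U
    have hWq : ∀ i, pd et (U i) q
        = α^2 * ∑ j, pd (ee j) (pd (ee j) (pd et (U i))) q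
          - (∑ j, U j q * pd (ee j) (V i) q) - (∑ j, V j q * pd (ee i) (U j) q)
          - pd (ee i) P q := by
      intro i
      have := (hVW i).symm.trans (hM i q)
      linarith [this]
    -- now pure algebra
    rw [hL]
    rw [Finset.sum_congr rfl (fun j _ => hR j)]
    simp only [Fin.sum_univ_three] at hdivq hWq ⊢
    linear_combination ((2 * U 0 q) * hWq 0 + (2 * U 1 q) * hWq 1 + (2 * U 2 q) * hWq 2 + (2 * P q + 2 * (U 0 q * V 0 q + U 1 q * V 1 q + U 2 q * V 2 q)) * hdivq q)
  -- integral of the time derivative of the density vanishes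
  have hzero : ∀ t, (∫ x, pd et e (x,t)) = 0 := by
    intro t
    have hfun : (fun x => pd et e (x,t)) = fun x => ∑ j, pd (ee j) (Φ j) (x,t) :=
      funext fun x => star _
    rw [hfun, integral_finset_sum _ (fun j _ => integrable_slice hK
      ((smPD (hΦsm j) (ee j)).continuous) ((hΦs j).pd hK.isClosed (ee j)) t)]
    refine Finset.sum_eq_zero fun j _ => ?_
    exact integral_pd_eq_zero hK (hΦsm j) (hΦs j) j t
  have hE : ∀ t, HasDerivAt (fun t => ∫ x, e (x,t)) 0 t := by
    intro t
    have := hasDerivAt_integral hK hesm hes t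
    rwa [hzero t] at this
  show (∫ x, e (x, t₁)) = ∫ x, e (x, t₂)
  exact is_const_of_deriv_eq_zero (fun t => (hE t).differentiableAt)
    (fun t => (hE t).deriv) t₁ t₂

end Key

def cmp (u : Sp → ℝ → (Fin 3 → ℝ)) (i : Fin 3) : Q → ℝ := fun q => u q.1 q.2 i

def scl (p : Sp → ℝ → ℝ) : Q → ℝ := fun q => p q.1 q.2

end EA

/-- Componentwise spatial Laplacian of a scalar function on ℝⁿ. -/
def lap {n : ℕ} (f : (Fin n → ℝ) → ℝ) (x : Fin n → ℝ) : ℝ :=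
  ∑ j, fderiv ℝ (fun y => fderiv ℝ f y (Pi.single j 1)) x (Pi.single j 1)

/-- **Conservation of the H¹ energy for the incompressible Euler-alpha
(Lagrangian-averaged Euler) equations.**  With `v = u − α²Δu`, `div u = 0`,
uniform compact support, and the Euler-alpha equation
`∂ₜv + (u·∇)v + v_j∇u^j + ∇p = 0`, the energy
`E(t) = ½∫(|u|² + α²|∇u|²)dx` is constant in time. -/
theorem euler_alpha_energy_conservation
    (α : ℝ) (hα : 0 < α)
    (u : (Fin 3 → ℝ) → ℝ → (Fin 3 → ℝ))
    (p : (Fin 3 → ℝ) → ℝ → ℝ)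
    -- smoothness
    (hu : ContDiff ℝ (⊤ : ℕ∞) (fun q : (Fin 3 → ℝ) × ℝ => u q.1 q.2))
    (hp : ContDiff ℝ (⊤ : ℕ∞) (fun q : (Fin 3 → ℝ) × ℝ => p q.1 q.2))
    -- incompressibility : div u = 0
    (hdiv : ∀ x t, ∑ i, fderiv ℝ (fun y => u y t i) x (Pi.single i 1) = 0)
    -- uniform compact support
    (K : Set (Fin 3 → ℝ)) (hK : IsCompact K)
    (hsupp : ∀ t, (Function.support (fun x => u x t) ⊆ K)
      ∧ (Function.support (fun x => p x t) ⊆ K))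
    -- v := u − α²Δu (componentwise Laplacian)
    (v : (Fin 3 → ℝ) → ℝ → (Fin 3 → ℝ))
    (hv : ∀ x t i, v x t i = u x t i - α ^ 2 * lap (fun y => u y t i) x)
    -- Euler-alpha motion equation : ∂ₜv + (u·∇)v + v_j∇u^j + ∇p = 0
    (hmotion : ∀ x t i,
      deriv (fun s => v x s i) t
        + fderiv ℝ (fun y => v y t i) x (u x t)
        + ∑ j, v x t j * fderiv ℝ (fun y => u y t j) x (Pi.single i 1)
        + fderiv ℝ (fun y => p y t) x (Pi.single i 1) = 0) :
    -- conclusion : E(t) = ½∫(|u|² + α²|∇u|²)dx is constant in time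
    ∀ t₁ t₂,
      (1 / 2) * (∫ x, ((∑ i, (u x t₁ i) ^ 2)
          + α ^ 2 * ∑ i, ∑ j, (fderiv ℝ (fun y => u y t₁ i) x (Pi.single j 1)) ^ 2))
      = (1 / 2) * (∫ x, ((∑ i, (u x t₂ i) ^ 2)
          + α ^ 2 * ∑ i, ∑ j, (fderiv ℝ (fun y => u y t₂ i) x (Pi.single j 1)) ^ 2)) := by

  classical
  intro t₁ t₂
  have hU : ∀ i, ContDiff ℝ (⊤:ℕ∞) (EA.cmp u i) := fun i => contDiff_pi.1 hu i
  have hP : ContDiff ℝ (⊤:ℕ∞) (EA.scl p) := hp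
  have hUd : ∀ i, Differentiable ℝ (EA.cmp u i) := fun i => EA.smDiff (hU i)
  set V : Fin 3 → EA.Q → ℝ := fun i q =>
    EA.cmp u i q - α^2 * ∑ j, EA.pd (EA.ee j) (EA.pd (EA.ee j) (EA.cmp u i)) q with hVdef
  have hVfun : ∀ i, V i = fun q =>
      EA.cmp u i q - α^2 * ∑ j, EA.pd (EA.ee j) (EA.pd (EA.ee j) (EA.cmp u i)) q :=
    fun i => congrFun hVdef i
  have hVsm : ∀ i, ContDiff ℝ (⊤:ℕ∞) (V i) := by
    intro i
    rw [hVfun i]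
    exact (hU i).sub (contDiff_const.mul
      (ContDiff.sum (fun j _ => EA.smPD (EA.smPD (hU i) (EA.ee j)) (EA.ee j))))
  -- v coincides with V
  have hVv : ∀ (x : EA.Sp) (t : ℝ) (i : Fin 3), v x t i = V i (x, t) := by
    intro x t i
    rw [hv x t i]
    have hlap : lap (fun y => u y t i) x
        = ∑ j, EA.pd (EA.ee j) (EA.pd (EA.ee j) (EA.cmp u i)) (x, t) := by
      unfold lap
      refine Finset.sum_congr rfl fun j _ => ?_
      have h1 : (fun y => fderiv ℝ (fun z => u z t i) y (Pi.single j 1))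
          = fun y => EA.pd (EA.ee j) (EA.cmp u i) (y, t) := by
        funext y
        exact EA.fderiv_slice_single (hUd i) y t j
      rw [h1]
      exact EA.fderiv_slice_single (EA.smDiff (EA.smPD (hU i) (EA.ee j))) x t j
    rw [hlap, hVfun i]
    rfl
  -- support
  have hUs : ∀ i, EA.SuppIn K (EA.cmp u i) := by
    intro i q hq
    have h0 : u q.1 q.2 = 0 :=
      Function.notMem_support.mp (fun hmem => hq ((hsupp q.2).1 hmem))
    have := congrFun h0 i
    simpa [EA.cmp] using this
  have hPs : EA.SuppIn K (EA.scl p) := by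
    intro q hq
    exact Function.notMem_support.mp (fun hmem => hq ((hsupp q.2).2 hmem))
  -- divergence-free
  have hdivq : ∀ q : EA.Q, ∑ i, EA.pd (EA.ee i) (EA.cmp u i) q = 0 := by
    intro q
    have h2 : ∀ i : Fin 3, fderiv ℝ (fun y => u y q.2 i) q.1 (Pi.single i 1)
        = EA.pd (EA.ee i) (EA.cmp u i) (q.1, q.2) :=
      fun i => EA.fderiv_slice_single (hUd i) q.1 q.2 i
    have h3 : ∑ i, EA.pd (EA.ee i) (EA.cmp u i) (q.1, q.2) = 0 := by
      rw [Finset.sum_congr rfl (fun i _ => (h2 i).symm)]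
      exact hdiv q.1 q.2
    simpa using h3
  -- motion equation
  have hM : ∀ (i : Fin 3) (q : EA.Q), EA.pd EA.et (V i) q
      = -(∑ j, EA.cmp u j q * EA.pd (EA.ee j) (V i) q)
        - (∑ j, V j q * EA.pd (EA.ee i) (EA.cmp u j) q) - EA.pd (EA.ee i) (EA.scl p) q := by
    intro i q
    obtain ⟨x, t⟩ := q
    have t1 : deriv (fun s => v x s i) t = EA.pd EA.et (V i) (x, t) := by
      have hfun : (fun s => v x s i) = fun s => V i (x, s) := funext fun s => hVv x s i
      rw [hfun]
      exact (EA.hasDerivAt_slice (EA.smDiff (hVsm i)) x t).deriv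
    have t2 : fderiv ℝ (fun y => v y t i) x (u x t)
        = ∑ j, EA.cmp u j (x, t) * EA.pd (EA.ee j) (V i) (x, t) := by
      have hfun2 : (fun y => v y t i) = fun y => V i (y, t) := funext fun y => hVv y t i
      rw [hfun2, EA.fderiv_slice (EA.smDiff (hVsm i)) x t (u x t),
        EA.fderiv_apply_vec0 (fderiv ℝ (V i) (x, t)) (u x t)]
      rfl
    have t3 : ∑ j, v x t j * fderiv ℝ (fun y => u y t j) x (Pi.single i 1)
        = ∑ j, V j (x, t) * EA.pd (EA.ee i) (EA.cmp u j) (x, t) := by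
      refine Finset.sum_congr rfl fun j _ => ?_
      rw [hVv x t j]
      congr 1
      exact EA.fderiv_slice_single (hUd j) x t i
    have t4 : fderiv ℝ (fun y => p y t) x (Pi.single i 1)
        = EA.pd (EA.ee i) (EA.scl p) (x, t) :=
      EA.fderiv_slice_single (EA.smDiff hP) x t i
    have hmo := hmotion x t i
    rw [t1, t2, t3, t4] at hmo
    linarith [hmo]
  -- apply the key lemma
  have hkey := EA.key α (EA.cmp u) (EA.scl p) V hU hP hK hUs hPs hdivq hVfun hM t₁ t₂
  have hint : ∀ t : ℝ,
      (fun x => ((∑ i, (u x t i) ^ 2)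
          + α ^ 2 * ∑ i, ∑ j, (fderiv ℝ (fun y => u y t i) x (Pi.single j 1)) ^ 2))
      = fun x => ((∑ i, EA.cmp u i (x, t) ^ 2)
          + α ^ 2 * ∑ i, ∑ j, EA.pd (EA.ee j) (EA.cmp u i) (x, t) ^ 2) := by
    intro t
    funext x
    congr 1
    refine congrArg _ ?_
    refine Finset.sum_congr rfl fun i _ => Finset.sum_congr rfl fun j _ => ?_
    exact congrArg (· ^ 2) (EA.fderiv_slice_single (hUd i) x t j)
  rw [hint t₁, hint t₂, hkey]
end
end
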